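/- Let p be a prime integer and M a period knot (p,p)-mosaic. If M is p_{(k,1)}-f.period for some k, then the equivalence class of M under cyclic rotations of rows and columns contains exactly p distinct mosaics, namely t_{x,0}(M) for x = 0,1,…,p−1. If M is not (1,1)-f.period, not (1,p)-f.period and not p_{(k,1)}-f.period for any k, then its equivalence class contains exactly p² distinct mosaics. -/

import Mathlib

/-- Connection point on the left edge, for each of the eleven mosaic tiles `T_0, …, T_10`. -/
def cpL : Fin 11 → Bool := ![false, true, false, false, true, true, false, true, true, true, true]
/-- Connection point on the right edge. -/
def cpR : Fin 11 → Bool := ![false, false, true, true, false, true, false, true, true, true, true]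
/-- Connection point on the top edge. -/
def cpT : Fin 11 → Bool := ![false, false, false, true, true, false, true, true, true, true, true]
/-- Connection point on the bottom edge. -/
def cpB : Fin 11 → Bool := ![false, true, true, false, false, false, true, true, true, true, true]

/-- An `(m,n)`-mosaic: an `m × n` matrix of mosaic tiles (row `i`, column `j`). -/
abbrev Mosaic (m n : ℕ) := Fin m → Fin n → Fin 11

/-- Suitably connected: contiguous tiles agree about connection points on their common edge. -/
def SuitablyConnected {m n : ℕ} (M : Mosaic m n) : Prop :=
  (∀ (i : Fin m) (j : Fin n) (h : j.val + 1 < n),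
      cpR (M i j) = cpL (M i ⟨j.val + 1, h⟩)) ∧
  (∀ (i : Fin m) (h : i.val + 1 < m) (j : Fin n),
      cpB (M i j) = cpT (M ⟨i.val + 1, h⟩ j))

/-- Suitably ∂-connected: tiles on opposite ends of a row (resp. column) agree about
connection points on the outer boundary edges. -/
def SuitablyBdryConnected {m n : ℕ} (M : Mosaic m n) : Prop :=
  (∀ (i : Fin m) (j j' : Fin n), j.val = 0 → j'.val = n - 1 →
      cpL (M i j) = cpR (M i j')) ∧
  (∀ (i i' : Fin m) (j : Fin n), i.val = 0 → i'.val = m - 1 →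
      cpT (M i j) = cpB (M i' j))

/-- A period knot `(m,n)`-mosaic. -/
def PeriodKnot {m n : ℕ} (M : Mosaic m n) : Prop :=
  SuitablyConnected M ∧ SuitablyBdryConnected M

/-- `D_P^{(m,n)}`, the number of period knot `(m,n)`-mosaics. -/
noncomputable def DP (m n : ℕ) : ℕ := Nat.card {M : Mosaic m n // PeriodKnot M}

/-- No connection points on the boundary of the mosaic. -/
def BoundaryFree {m n : ℕ} (M : Mosaic m n) : Prop :=
  ∀ (i : Fin m) (j : Fin n),
    (j.val = 0 → cpL (M i j) = false) ∧ (j.val = n - 1 → cpR (M i j) = false) ∧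
    (i.val = 0 → cpT (M i j) = false) ∧ (i.val = m - 1 → cpB (M i j) = false)

/-- `D^{(m,n)}`, the number of knot `(m,n)`-mosaics. -/
noncomputable def DK (m n : ℕ) : ℕ :=
  Nat.card {M : Mosaic m n // SuitablyConnected M ∧ BoundaryFree M}

/-- Subtract `x` from the index `i`, modulo `m`. -/
def shiftIdx {m : ℕ} (x : ℤ) (i : Fin m) : Fin m :=
  ⟨(((i : ℤ) - x) % (m : ℤ)).toNat, by
    have hm : (0 : ℤ) < (m : ℤ) := by exact_mod_cast i.pos
    have h1 := Int.emod_lt_of_pos ((i : ℤ) - x) hm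
    have h2 := Int.emod_nonneg ((i : ℤ) - x) (by omega : (m : ℤ) ≠ 0)
    omega⟩

/-- The cyclic rotation `t_{x,y}`: `(t_{x,y} M)_{i,j} = M_{i-x, j-y}` (indices mod `m`, `n`). -/
def tshift {m n : ℕ} (x y : ℤ) (M : Mosaic m n) : Mosaic m n :=
  fun i j => M (shiftIdx x i) (shiftIdx y j)

/-- `M` is a `(p,q)`-f.period mosaic: `p` is the least positive integer with `M = t_{p,0}(M)`
and `q` is the least positive integer with `M = t_{0,q}(M)`. -/
def IsFPeriod {m n : ℕ} (p q : ℕ) (M : Mosaic m n) : Prop :=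
  IsLeast {a : ℕ | 0 < a ∧ M = tshift (a : ℤ) 0 M} p ∧
  IsLeast {b : ℕ | 0 < b ∧ M = tshift 0 (b : ℤ) M} q

/-- `d_{p,q}`: the number of `(p,q)`-f.period knot `(m,n)`-mosaics. -/
noncomputable def dFP (m n p q : ℕ) : ℕ :=
  Nat.card {M : Mosaic m n // PeriodKnot M ∧ IsFPeriod p q M}

/-- Equivalence of period knot mosaics under cyclic rotations of rows and columns. -/
def torRel (m n : ℕ) (A B : {M : Mosaic m n // PeriodKnot M}) : Prop :=
  ∃ x y : ℤ, tshift x y A.val = B.val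

/-- `D_T^{(m,n)}`, the number of toroidal knot `(m,n)`-mosaics. -/
noncomputable def DT (m n : ℕ) : ℕ := Nat.card (Quot (torRel m n))

/-- `M` is a `p_{(k,1)}`-f.period knot `(p,p)`-mosaic: not `(1,1)`-f.period and `M = t_{k,1}(M)`. -/
def IsPk1FPeriod {p : ℕ} (k : ℕ) (M : Mosaic p p) : Prop :=
  ¬ IsFPeriod 1 1 M ∧ M = tshift (k : ℤ) 1 M

/-- `d_{p_{(k,1)}}`: the number of `p_{(k,1)}`-f.period knot `(p,p)`-mosaics. -/
noncomputable def dPk (p k : ℕ) : ℕ :=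
  Nat.card {M : Mosaic p p // PeriodKnot M ∧ IsPk1FPeriod k M}

/-- `d_{p²}`: the number of period knot `(p,p)`-mosaics that are not `(1,1)`-, not `(1,p)`-
and not `p_{(k,1)}`-f.period for any `k`. -/
noncomputable def dPsq (p : ℕ) : ℕ :=
  Nat.card {M : Mosaic p p // PeriodKnot M ∧ ¬ IsFPeriod 1 1 M ∧ ¬ IsFPeriod 1 p M ∧
    ∀ k < p, ¬ IsPk1FPeriod k M}

/-- Entries of the pair `(X_k, O_k)` of `2^k × 2^k` matrices defined by the block recursion
`X_{k+1} = [[X_k, O_k], [O_k, X_k]]`, `O_{k+1} = [[O_k, X_k], [X_k, 4 O_k]]`,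
seeded with `X_0 = O_0 = [1]` (the most significant bit selects the block). -/
def matsXO : ℕ → ℕ → ℕ → ℕ × ℕ
  | 0, _, _ => (1, 1)
  | k + 1, i, j =>
    let v := matsXO k (i % 2 ^ k) (j % 2 ^ k)
    if i / 2 ^ k % 2 = 0 then
      if j / 2 ^ k % 2 = 0 then (v.1, v.2) else (v.2, v.1)
    else
      if j / 2 ^ k % 2 = 0 then (v.2, v.1) else (v.1, 4 * v.2)

/-- The matrix `X_k`. -/
def Xmat (m : ℕ) : Matrix (Fin (2 ^ m)) (Fin (2 ^ m)) ℕ :=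
  Matrix.of fun i j => (matsXO m i j).1

/-- The matrix `O_k`. -/
def Omat (m : ℕ) : Matrix (Fin (2 ^ m)) (Fin (2 ^ m)) ℕ :=
  Matrix.of fun i j => (matsXO m i j).2

/-- Entries of the quadruple `(X_k^+, X_k^-, O_k^+, O_k^-)` of `2^k × 2^k` matrices defined by
the block recursions `X_{k+1}^+ = [[X_k^+, O_k^-],[O_k^-, X_k^+]]`,
`X_{k+1}^- = [[X_k^-, O_k^+],[O_k^+, X_k^-]]`, `O_{k+1}^+ = [[O_k^+, X_k^-],[X_k^-, 4 O_k^+]]`,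
`O_{k+1}^- = [[O_k^-, X_k^+],[X_k^+, 4 O_k^-]]`, seeded with `X_0^+ = O_0^+ = [1]`,
`X_0^- = O_0^- = [0]` (the most significant bit selects the block). -/
def matsPM : ℕ → ℕ → ℕ → ℕ × ℕ × ℕ × ℕ
  | 0, _, _ => (1, 0, 1, 0)
  | k + 1, i, j =>
    let v := matsPM k (i % 2 ^ k) (j % 2 ^ k)
    match v with
    | (xp, xm, op, om) =>
      if i / 2 ^ k % 2 = 0 then
        if j / 2 ^ k % 2 = 0 then (xp, xm, op, om) else (om, op, xm, xp)
      else
        if j / 2 ^ k % 2 = 0 then (om, op, xm, xp) else (xp, xm, 4 * op, 4 * om)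

/-- The matrix `X_m^+`. -/
def Xplus (m : ℕ) : Matrix (Fin (2 ^ m)) (Fin (2 ^ m)) ℕ :=
  Matrix.of fun i j => (matsPM m i j).1
/-- The matrix `X_m^-`. -/
def Xminus (m : ℕ) : Matrix (Fin (2 ^ m)) (Fin (2 ^ m)) ℕ :=
  Matrix.of fun i j => (matsPM m i j).2.1
/-- The matrix `O_m^+`. -/
def Oplus (m : ℕ) : Matrix (Fin (2 ^ m)) (Fin (2 ^ m)) ℕ :=
  Matrix.of fun i j => (matsPM m i j).2.2.1
/-- The matrix `O_m^-`. -/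
def Ominus (m : ℕ) : Matrix (Fin (2 ^ m)) (Fin (2 ^ m)) ℕ :=
  Matrix.of fun i j => (matsPM m i j).2.2.2

/-- The boundary state (a word in `{o,x}^m`) encoded by `a : Fin (2^m)` in reverse
lexicographic order: the first position is the least significant bit. -/
def stateOf {m : ℕ} (a : Fin (2 ^ m)) : Fin m → Bool := fun r => (a : ℕ).testBit r.val

/-- The `l`-state of a mosaic. -/
def lState {m n : ℕ} (hn : 0 < n) (M : Mosaic m n) : Fin m → Bool :=
  fun i => cpL (M i ⟨0, hn⟩)
/-- The `r`-state of a mosaic. -/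
def rState {m n : ℕ} (hn : 0 < n) (M : Mosaic m n) : Fin m → Bool :=
  fun i => cpR (M i ⟨n - 1, Nat.sub_lt hn Nat.one_pos⟩)
/-- The `t`-state of a mosaic. -/
def tState {m n : ℕ} (hm : 0 < m) (M : Mosaic m n) : Fin n → Bool :=
  fun j => cpT (M ⟨0, hm⟩ j)
/-- The `b`-state of a mosaic. -/
def bState {m n : ℕ} (hm : 0 < m) (M : Mosaic m n) : Fin n → Bool :=
  fun j => cpB (M ⟨m - 1, Nat.sub_lt hm Nat.one_pos⟩ j)

/-- The state matrix `N^{(m,n)+}`: its `(a,b)` entry counts the suitably connected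
`(m,n)`-mosaics whose `t`-state equals its `b`-state, whose `l`-state is the `a`-th state
and whose `r`-state is the `b`-th state. -/
noncomputable def Nplus (m n : ℕ) (hm : 0 < m) (hn : 0 < n) :
    Matrix (Fin (2 ^ m)) (Fin (2 ^ m)) ℕ :=
  Matrix.of fun a b => Nat.card {M : Mosaic m n // SuitablyConnected M ∧
    tState hm M = bState hm M ∧ lState hn M = stateOf a ∧ rState hn M = stateOf b}

/-- The index map `α` for `tr^{(k)}`: cyclic shift by `k` positions of the `p`-bit binary
representation, i.e. `α(i) ≡ 2^k i (mod 2^p - 1)` for `0 < i < 2^p - 1`, `α(0) = 0`,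
`α(2^p-1) = 2^p-1`. -/
def alphaIdx (p k : ℕ) (i : Fin (2 ^ p)) : Fin (2 ^ p) :=
  if h : (i : ℕ) = 2 ^ p - 1 then i
  else ⟨(2 ^ k * (i : ℕ)) % (2 ^ p - 1), by
    have h1 : 0 < 2 ^ p := Nat.two_pow_pos p
    have h2 : (i : ℕ) < 2 ^ p := i.isLt
    have h3 : 0 < 2 ^ p - 1 := by omega
    have h4 := Nat.mod_lt (2 ^ k * (i : ℕ)) h3
    omega⟩

/-- The twisted trace `tr^{(k)}(A) = Σ_i A_{i+1, α(i)+1}`. -/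
def trk (p k : ℕ) (A : Matrix (Fin (2 ^ p)) (Fin (2 ^ p)) ℕ) : ℕ :=
  ∑ i, A i (alphaIdx p k i)

section AuxShift

variable {m n : ℕ}

lemma shiftIdx_coe (x : ℤ) (i : Fin m) :
    ((shiftIdx x i : Fin m) : ℤ) = ((i : ℤ) - x) % (m : ℤ) := by
  have hm : (0 : ℤ) < (m : ℤ) := by exact_mod_cast i.pos
  simp only [shiftIdx]
  exact Int.toNat_of_nonneg (Int.emod_nonneg _ (by omega))

lemma shiftIdx_congr {x x' : ℤ} (h : x ≡ x' [ZMOD (m : ℤ)]) (i : Fin m) :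
    shiftIdx x i = shiftIdx x' i := by
  apply Fin.ext
  have : ((i : ℤ) - x) % (m : ℤ) = ((i : ℤ) - x') % (m : ℤ) :=
    Int.ModEq.sub (Int.ModEq.refl _) h
  simp only [shiftIdx, this]

lemma shiftIdx_shiftIdx (x x' : ℤ) (i : Fin m) :
    shiftIdx x (shiftIdx x' i) = shiftIdx (x + x') i := by
  apply Fin.ext
  show ((((shiftIdx x' i : Fin m) : ℤ) - x) % (m : ℤ)).toNat
      = (((i : ℤ) - (x + x')) % (m : ℤ)).toNat
  rw [shiftIdx_coe]
  congr 1
  have h1 : ((i : ℤ) - x') % (m : ℤ) ≡ (i : ℤ) - x' [ZMOD (m : ℤ)] :=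
    Int.emod_emod_of_dvd _ dvd_rfl
  have h2 : ((i : ℤ) - x') % (m : ℤ) - x ≡ (i : ℤ) - (x + x') [ZMOD (m : ℤ)] := by
    have := h1.sub_right x
    simpa [sub_sub, add_comm x x'] using this
  exact h2

lemma shiftIdx_zero (i : Fin m) : shiftIdx (0 : ℤ) i = i := by
  apply Fin.ext
  have hm : (0 : ℤ) < (m : ℤ) := by exact_mod_cast i.pos
  have : ((i : ℤ) - 0) % (m : ℤ) = (i : ℤ) := by
    rw [sub_zero]
    exact Int.emod_eq_of_lt (by positivity) (by exact_mod_cast i.isLt)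
  simp only [shiftIdx, this, Int.toNat_natCast]

lemma tshift_tshift (x y x' y' : ℤ) (M : Mosaic m n) :
    tshift x y (tshift x' y' M) = tshift (x' + x) (y' + y) M := by
  funext i j
  simp only [tshift, shiftIdx_shiftIdx]

lemma tshift_zero (M : Mosaic m n) : tshift 0 0 M = M := by
  funext i j
  simp only [tshift, shiftIdx_zero]

lemma tshift_congr {x x' y y' : ℤ} (hx : x ≡ x' [ZMOD (m : ℤ)])
    (hy : y ≡ y' [ZMOD (n : ℤ)]) (M : Mosaic m n) :
    tshift x y M = tshift x' y' M := by
  funext i j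
  simp only [tshift, shiftIdx_congr hx, shiftIdx_congr hy]

lemma tshift_eq_iff {x x' y y' : ℤ} (M : Mosaic m n) :
    tshift x y M = tshift x' y' M ↔ tshift (x - x') (y - y') M = M := by
  constructor
  · intro h
    have := congrArg (tshift (-x') (-y')) h
    rw [tshift_tshift, tshift_tshift] at this
    simpa [sub_eq_add_neg, tshift_zero] using this
  · intro h
    have := congrArg (tshift x' y') h
    rw [tshift_tshift] at this
    have hxy : x - x' + x' = x ∧ y - y' + y' = y := ⟨by ring, by ring⟩
    rw [hxy.1, hxy.2] at this
    exact this

lemma tshift_fix_mul {x y : ℤ} {M : Mosaic m n} (h : tshift x y M = M) (z : ℤ) :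
    tshift (z * x) (z * y) M = M := by
  induction z using Int.induction_on with
  | zero => simpa using tshift_zero M
  | succ k ih =>
    have : tshift x y (tshift (k * x) (k * y) M) = tshift (k * x + x) (k * y + y) M :=
      tshift_tshift _ _ _ _ M
    rw [ih, h] at this
    rw [show ((k : ℤ) + 1) * x = k * x + x by ring, show ((k : ℤ) + 1) * y = k * y + y by ring]
    exact this.symm
  | pred k ih =>
    have : tshift (-x) (-y) (tshift (-k * x) (-k * y) M)
        = tshift (-k * x + -x) (-k * y + -y) M := tshift_tshift _ _ _ _ M
    rw [ih] at this
    have hfix : tshift (-x) (-y) M = M := by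
      have := congrArg (tshift (-x) (-y)) h
      rw [tshift_tshift] at this
      simpa [tshift_zero] using this.symm
    rw [hfix] at this
    rw [show (-(k : ℤ) - 1) * x = -k * x + -x by ring,
      show (-(k : ℤ) - 1) * y = -k * y + -y by ring]
    exact this.symm

lemma modeq_toNat_emod (p : ℕ) (hp : 0 < p) (x : ℤ) :
    (((x % (p : ℤ)).toNat : ℤ)) ≡ x [ZMOD (p : ℤ)] := by
  have hp' : (0 : ℤ) < (p : ℤ) := by exact_mod_cast hp
  rw [Int.toNat_of_nonneg (Int.emod_nonneg _ (by omega))]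
  exact Int.emod_emod_of_dvd _ dvd_rfl

lemma toNat_emod_lt (p : ℕ) (hp : 0 < p) (x : ℤ) : (x % (p : ℤ)).toNat < p := by
  have hp' : (0 : ℤ) < (p : ℤ) := by exact_mod_cast hp
  have h1 := Int.emod_lt_of_pos x hp'
  have h2 := Int.emod_nonneg x (by omega : (p : ℤ) ≠ 0)
  omega

lemma prime_fix_one {p : ℕ} (hP : p.Prime) {M : Mosaic p p} {x y z : ℤ}
    (h : tshift x y M = M) (hz : ¬ (p : ℤ) ∣ z) :
    ∃ b : ℤ, tshift (b * x) (b * y) M = M ∧ b * z ≡ 1 [ZMOD (p : ℤ)] := by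
  have hcop : IsCoprime (p : ℤ) z := by
    rw [Int.isCoprime_iff_gcd_eq_one]
    have : ¬ p ∣ z.natAbs := by
      intro hd
      exact hz (Int.natCast_dvd_natCast.mpr hd |>.trans (Int.natAbs_dvd.mpr dvd_rfl))
    exact Nat.Coprime.gcd_eq_one ((Nat.Prime.coprime_iff_not_dvd hP).mpr this)
  obtain ⟨a, b, hab⟩ := hcop
  refine ⟨b, tshift_fix_mul h b, ?_⟩
  have hd : (p : ℤ) ∣ 1 - b * z := ⟨a, by linarith⟩
  exact Int.modEq_iff_dvd.mpr hd

lemma row_one {p : ℕ} (hP : p.Prime) {M : Mosaic p p} {z : ℤ}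
    (h : tshift z 0 M = M) (hz : ¬ (p : ℤ) ∣ z) : tshift 1 0 M = M := by
  obtain ⟨b, hfix, hmod⟩ := prime_fix_one hP h hz
  rw [mul_zero] at hfix
  calc tshift 1 0 M = tshift (b * z) 0 M := tshift_congr hmod.symm (Int.ModEq.refl 0) M
  _ = M := hfix

lemma col_one {p : ℕ} (hP : p.Prime) {M : Mosaic p p} {z : ℤ}
    (h : tshift 0 z M = M) (hz : ¬ (p : ℤ) ∣ z) : tshift 0 1 M = M := by
  obtain ⟨b, hfix, hmod⟩ := prime_fix_one hP h hz
  rw [mul_zero] at hfix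
  calc tshift 0 1 M = tshift 0 (b * z) M := tshift_congr (Int.ModEq.refl 0) hmod.symm M
  _ = M := hfix

lemma isFP11 {p : ℕ} {M : Mosaic p p} (h1 : tshift 1 0 M = M) (h2 : tshift 0 1 M = M) :
    IsFPeriod 1 1 M :=
  ⟨⟨⟨Nat.one_pos, by simpa using h1.symm⟩, fun a ha => ha.1⟩,
   ⟨⟨Nat.one_pos, by simpa using h2.symm⟩, fun a ha => ha.1⟩⟩

lemma nat_eq_of_dvd_sub {p : ℕ} {x x' : ℕ} (hx : x < p) (hx' : x' < p)
    (h : (p : ℤ) ∣ (x : ℤ) - (x' : ℤ)) : x = x' := by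
  by_contra hne
  have hnz : (x : ℤ) - (x' : ℤ) ≠ 0 := by omega
  have h1 := Int.le_of_dvd (abs_pos.mpr hnz) ((dvd_abs _ _).mpr h)
  have h2 : |(x : ℤ) - (x' : ℤ)| < p := abs_lt.mpr ⟨by omega, by omega⟩
  linarith

lemma isFP1p {p : ℕ} (hP : p.Prime) {M : Mosaic p p} (h1 : tshift 1 0 M = M)
    (h2 : tshift 0 1 M ≠ M) : IsFPeriod 1 p M := by
  refine ⟨⟨⟨Nat.one_pos, by simpa using h1.symm⟩, fun a ha => ha.1⟩, ⟨⟨hP.pos, ?_⟩, ?_⟩⟩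
  · have hm : ((p : ℕ) : ℤ) ≡ 0 [ZMOD (p : ℤ)] := Int.modEq_iff_dvd.mpr ⟨-1, by ring⟩
    have := tshift_congr (Int.ModEq.refl 0) hm M
    rw [this, tshift_zero]
  · intro b hb
    by_contra hlt
    push_neg at hlt
    have hbz : ¬ (p : ℤ) ∣ (b : ℤ) := by
      intro hd
      have := Int.le_of_dvd (by exact_mod_cast hb.1) hd
      omega
    exact h2 (col_one hP hb.2.symm hbz)

end AuxShift

/-- For a prime `p` and a period knot `(p,p)`-mosaic `M`: if `M` is
`p_{(k,1)}`-f.period for some `k`, its equivalence class under cyclic rotations consists of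
exactly the `p` distinct mosaics `t_{x,0}(M)`, `0 ≤ x < p`; if `M` is not `(1,1)`-, not
`(1,p)`- and not `p_{(k,1)}`-f.period for any `k`, its class has exactly `p²` elements. -/
theorem prime_square_orbit_sizes (p : ℕ) (hP : p.Prime) (M : Mosaic p p)
    (hM : PeriodKnot M) :
    (∀ k < p, IsPk1FPeriod k M →
      (∀ x y : ℤ, ∃ x' : ℕ, x' < p ∧ tshift x y M = tshift (x' : ℤ) 0 M) ∧
      (∀ x x' : ℕ, x < p → x' < p →
        tshift (x : ℤ) 0 M = tshift (x' : ℤ) 0 M → x = x') ∧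
      Nat.card {M' : Mosaic p p // ∃ x y : ℤ, tshift x y M = M'} = p) ∧
    ((¬ IsFPeriod 1 1 M ∧ ¬ IsFPeriod 1 p M ∧ ∀ k < p, ¬ IsPk1FPeriod k M) →
      Nat.card {M' : Mosaic p p // ∃ x y : ℤ, tshift x y M = M'} = p ^ 2) := by
  have hp0 : 0 < p := hP.pos
  haveI : NeZero p := ⟨hp0.ne'⟩
  constructor
  · rintro k hk ⟨h11, hkeq⟩
    have hfixneg : tshift (-(k : ℤ)) (-1) M = M := by
      have h0 : tshift 0 0 M = tshift (k : ℤ) 1 M := by rw [tshift_zero]; exact hkeq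
      have := (tshift_eq_iff M).mp h0
      simpa using this
    have hfixmul : ∀ z : ℤ, tshift (z * k) z M = M := by
      intro z
      have := tshift_fix_mul hfixneg (-z)
      rw [show (-z) * (-(k : ℤ)) = z * k by ring, show (-z) * (-1 : ℤ) = z by ring] at this
      exact this
    have h10 : ¬ tshift 1 0 M = M := by
      intro h1
      have hallz : ∀ z : ℤ, tshift z 0 M = M := fun z => by
        have := tshift_fix_mul h1 z; simpa using this
      have h2 : tshift (k : ℤ) 1 M = M := by
        have := hfixmul 1; simpa using this
      have h01 : tshift 0 1 M = M := by
        have h3 := tshift_tshift (-(k : ℤ)) 0 (k : ℤ) 1 M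
        rw [h2, hallz (-(k : ℤ))] at h3
        simpa using h3.symm
      exact h11 (isFP11 h1 h01)
    have partA : ∀ x y : ℤ, ∃ x' : ℕ, x' < p ∧ tshift x y M = tshift (x' : ℤ) 0 M := by
      intro x y
      have hx : tshift x y M = tshift (x - y * k) 0 M := by
        have h4 := tshift_tshift (x - y * (k : ℤ)) 0 (y * (k : ℤ)) y M
        rw [hfixmul y, show (y * (k : ℤ) + (x - y * k)) = x by ring, add_zero] at h4
        exact h4.symm
      refine ⟨((x - y * k) % (p : ℤ)).toNat, toNat_emod_lt p hp0 _, ?_⟩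
      rw [hx]
      exact tshift_congr (modeq_toNat_emod p hp0 _).symm (Int.ModEq.refl 0) M
    have partB : ∀ x x' : ℕ, x < p → x' < p →
        tshift (x : ℤ) 0 M = tshift (x' : ℤ) 0 M → x = x' := by
      intro x x' hx hx' heq
      have hd : tshift ((x : ℤ) - x') 0 M = M := by
        have := (tshift_eq_iff M).mp heq; simpa using this
      have hpd : (p : ℤ) ∣ (x : ℤ) - x' := by
        by_contra hdvd
        exact h10 (row_one hP hd hdvd)
      exact nat_eq_of_dvd_sub hx hx' hpd
    refine ⟨partA, partB, ?_⟩
    let f : ZMod p → {M' : Mosaic p p // ∃ x y : ℤ, tshift x y M = M'} :=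
      fun a => ⟨tshift (a.val : ℤ) 0 M, (a.val : ℤ), 0, rfl⟩
    have hfbij : Function.Bijective f := by
      constructor
      · intro a b hab
        have h5 : tshift (a.val : ℤ) 0 M = tshift (b.val : ℤ) 0 M :=
          congrArg Subtype.val hab
        have h6 := partB a.val b.val a.val_lt b.val_lt h5
        exact ZMod.val_injective p h6
      · rintro ⟨M', x, y, rfl⟩
        obtain ⟨x', hx', hxy⟩ := partA x y
        refine ⟨(x' : ZMod p), ?_⟩
        apply Subtype.ext
        show tshift (((x' : ZMod p)).val : ℤ) 0 M = tshift x y M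
        rw [ZMod.val_cast_of_lt hx']
        exact hxy.symm
    rw [← Nat.card_eq_of_bijective f hfbij, Nat.card_zmod]
  · rintro ⟨h11, h1p, hall⟩
    have h10 : ¬ tshift 1 0 M = M := by
      intro h1
      by_cases h01 : tshift 0 1 M = M
      · exact h11 (isFP11 h1 h01)
      · exact h1p (isFP1p hP h1 h01)
    have hstab : ∀ x y : ℤ, tshift x y M = M → (p : ℤ) ∣ x ∧ (p : ℤ) ∣ y := by
      intro x y hxy
      by_cases hy : (p : ℤ) ∣ y
      · have hy0 : y ≡ 0 [ZMOD (p : ℤ)] := Int.modEq_iff_dvd.mpr (by simpa using hy.neg_right)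
        have hx0 : tshift x 0 M = M := by
          rw [← tshift_congr (Int.ModEq.refl x) hy0 M]; exact hxy
        refine ⟨?_, hy⟩
        by_contra hx
        exact h10 (row_one hP hx0 hx)
      · exfalso
        obtain ⟨b, hfix, hmod⟩ := prime_fix_one hP hxy hy
        have hk' : ((b * x) % (p : ℤ)).toNat < p := toNat_emod_lt p hp0 _
        have hMk : M = tshift ((((b * x) % (p : ℤ)).toNat : ℕ) : ℤ) 1 M := by
          have hcongr : tshift (b * x) (b * y) M
              = tshift ((((b * x) % (p : ℤ)).toNat : ℕ) : ℤ) 1 M :=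
            tshift_congr (modeq_toNat_emod p hp0 _).symm hmod M
          rw [← hcongr]; exact hfix.symm
        exact hall _ hk' ⟨h11, hMk⟩
    let g : ZMod p × ZMod p → {M' : Mosaic p p // ∃ x y : ℤ, tshift x y M = M'} :=
      fun ab => ⟨tshift (ab.1.val : ℤ) (ab.2.val : ℤ) M, (ab.1.val : ℤ), (ab.2.val : ℤ), rfl⟩
    have hgbij : Function.Bijective g := by
      constructor
      · intro a b hab
        have h5 : tshift (a.1.val : ℤ) (a.2.val : ℤ) M
            = tshift (b.1.val : ℤ) (b.2.val : ℤ) M := congrArg Subtype.val hab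
        have h6 := (tshift_eq_iff M).mp h5
        obtain ⟨hd1, hd2⟩ := hstab _ _ h6
        have e1 := nat_eq_of_dvd_sub a.1.val_lt b.1.val_lt hd1
        have e2 := nat_eq_of_dvd_sub a.2.val_lt b.2.val_lt hd2
        exact Prod.ext (ZMod.val_injective p e1) (ZMod.val_injective p e2)
      · rintro ⟨M', x, y, rfl⟩
        refine ⟨(((x % (p : ℤ)).toNat : ZMod p), ((y % (p : ℤ)).toNat : ZMod p)), ?_⟩
        apply Subtype.ext
        show tshift ((((x % (p : ℤ)).toNat : ZMod p)).val : ℤ)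
            ((((y % (p : ℤ)).toNat : ZMod p)).val : ℤ) M = tshift x y M
        rw [ZMod.val_cast_of_lt (toNat_emod_lt p hp0 x),
          ZMod.val_cast_of_lt (toNat_emod_lt p hp0 y)]
        exact tshift_congr (modeq_toNat_emod p hp0 x) (modeq_toNat_emod p hp0 y) M
    rw [← Nat.card_eq_of_bijective g hgbij, Nat.card_prod, Nat.card_zmod, sq]
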